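/- Let A be a real symmetric positive definite n×n matrix and let B be a real symmetric n×n matrix such that the spectral radius ρ_err := ρ(I − B·A) of the error propagation matrix I − B·A satisfies ρ_err < 1. Let u ∈ ℝⁿ be the exact solution of A·u = f, and let the iterates be defined by u^{(k+1)} = u^{(k)} + B·(f − A·u^{(k)}) for k ≥ 0 from an arbitrary initial guess u^{(0)}. Then for every k ≥ 0, ‖u − u^{(k+1)}‖_A ≤ (ρ_err / (1 − ρ_err)) · ‖u^{(k+1)} − u^{(k)}‖_A. -/

import Mathlib

open Matrix

/-- The `A`-norm of a vector `v`: `‖v‖_A = √(A·v ⋅ v)`. -/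
noncomputable def ANorm {n : ℕ} (A : Matrix (Fin n) (Fin n) ℝ) (v : Fin n → ℝ) : ℝ :=
  Real.sqrt (A.mulVec v ⬝ᵥ v)

/-- The spectral radius of a square real matrix: the supremum of the absolute values
of its (real) eigenvalues. -/
noncomputable def specRadius {n : ℕ} (M : Matrix (Fin n) (Fin n) ℝ) : ℝ :=
  sSup {r : ℝ | ∃ μ : ℝ, Module.End.HasEigenvalue (Matrix.toLin' M) μ ∧ r = |μ|}

/-- Auxiliary abstract lemma: if `T` is a symmetric operator on a nontrivial
finite-dimensional real inner product space, `ρ` is the sup of the absolute values of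
its eigenvalues and `ρ < 1`, then `‖T x‖ ≤ ρ/(1-ρ) * ‖x - T x‖`, stated for a
function `N` agreeing with the norm. -/
theorem aux_symm_op_bound {E : Type*} [NormedAddCommGroup E] [InnerProductSpace ℝ E]
    [FiniteDimensional ℝ E] (hfr : 0 < Module.finrank ℝ E)
    (T : E →ₗ[ℝ] E) (hT : T.IsSymmetric) (ρ : ℝ)
    (hρeq : ρ = sSup {r : ℝ | ∃ μ : ℝ, Module.End.HasEigenvalue T μ ∧ r = |μ|})
    (hρ1 : ρ < 1) (N : E → ℝ) (hN : ∀ v, N v = ‖v‖)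
    (x y : E) (hxy : T x = y) :
    N y ≤ ρ / (1 - ρ) * N (x - y) := by
  subst hxy
  rw [hN, hN]
  set m := Module.finrank ℝ E with hmdef
  have hm : Module.finrank ℝ E = m := rfl
  set b := hT.eigenvectorBasis hm with hb
  set μ := hT.eigenvalues hm with hμ
  set S : Set ℝ := {r : ℝ | ∃ ν : ℝ, Module.End.HasEigenvalue T ν ∧ r = |ν|} with hS
  have hSsub : S ⊆ Set.range (fun i => |μ i|) := by
    rintro r ⟨ν, hν, rfl⟩
    obtain ⟨v, hv⟩ := hν.exists_hasEigenvector
    have hv0 : v ≠ 0 := hv.2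
    have hvrepr : b.repr v ≠ 0 := by
      simpa using (b.repr.map_eq_zero_iff (x := v)).not.mpr hv0
    obtain ⟨i, hi⟩ : ∃ i, b.repr v i ≠ 0 := by
      by_contra h
      push_neg at h
      exact hvrepr (by ext i; simpa using h i)
    have h1 : b.repr (T v) i = μ i * b.repr v i :=
      hT.eigenvectorBasis_apply_self_apply hm v i
    rw [hv.apply_eq_smul] at h1
    simp only [_root_.map_smul] at h1
    have h2 : ν * b.repr v i = μ i * b.repr v i := by simpa [smul_eq_mul] using h1
    have hνμ : ν = μ i := by
      rcases mul_eq_mul_right_iff.mp h2 with h | h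
      · exact h
      · exact absurd h hi
    exact ⟨i, by rw [hνμ]⟩
  have hbdd : BddAbove S :=
    (Set.finite_range (fun i => |μ i|)).bddAbove.mono hSsub
  have hρge : ∀ i, |μ i| ≤ ρ := by
    intro i
    rw [hρeq]
    exact le_csSup hbdd ⟨μ i, hT.hasEigenvalue_eigenvalues hm i, rfl⟩
  have hρ0 : 0 ≤ ρ := le_trans (abs_nonneg _) (hρge ⟨0, hfr⟩)
  -- operator norm bound
  have hTnorm : ∀ v : E, ‖T v‖ ≤ ρ * ‖v‖ := by
    intro v
    have h1 : ‖T v‖ = ‖b.repr (T v)‖ := (b.repr.norm_map (T v)).symm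
    have h2 : ‖v‖ = ‖b.repr v‖ := (b.repr.norm_map v).symm
    rw [h1, h2, EuclideanSpace.norm_eq, EuclideanSpace.norm_eq]
    rw [← Real.sqrt_sq hρ0, ← Real.sqrt_mul (sq_nonneg ρ)]
    apply Real.sqrt_le_sqrt
    rw [Finset.mul_sum]
    apply Finset.sum_le_sum
    intro i _
    have h3 : b.repr (T v) i = μ i * b.repr v i :=
      hT.eigenvectorBasis_apply_self_apply hm v i
    rw [h3]
    have h4 : ‖μ i * b.repr v i‖ ^ 2 = (μ i)^2 * ‖b.repr v i‖^2 := by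
      rw [norm_mul, mul_pow]
      simp [Real.norm_eq_abs, sq_abs]
    rw [h4]
    apply mul_le_mul_of_nonneg_right _ (sq_nonneg _)
    calc (μ i)^2 = |μ i|^2 := (sq_abs _).symm
    _ ≤ ρ^2 := pow_le_pow_left₀ (abs_nonneg _) (hρge i) 2
  -- conclude
  have h1 : ‖T x‖ ≤ ρ * ‖x‖ := hTnorm x
  have h2 : ‖x‖ ≤ ‖x - T x‖ + ‖T x‖ := by
    calc ‖x‖ = ‖(x - T x) + T x‖ := by rw [sub_add_cancel]
    _ ≤ _ := norm_add_le _ _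
  have hpos : (0:ℝ) < 1 - ρ := by linarith
  rw [div_mul_eq_mul_div, le_div_iff₀ hpos]
  nlinarith [norm_nonneg (T x), norm_nonneg (x - T x), norm_nonneg x,
    mul_le_mul_of_nonneg_left h2 hρ0]

/-- If `A` is symmetric positive definite, `B` is symmetric, and the spectral radius
`ρ_err = ρ(I - B·A)` satisfies `ρ_err < 1`, then for the iteration
`u^{(k+1)} = u^{(k)} + B(f - A u^{(k)})` with exact solution `A u = f`, one has
`‖u - u^{(k+1)}‖_A ≤ ρ_err/(1-ρ_err) · ‖u^{(k+1)} - u^{(k)}‖_A` for every `k ≥ 0`. -/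
theorem algebraic_error_upper_bound {n : ℕ} (A B : Matrix (Fin n) (Fin n) ℝ)
    (hA : A.PosDef) (hB : B.IsSymm)
    (hρ : specRadius (1 - B * A) < 1)
    (f u : Fin n → ℝ) (hu : A.mulVec u = f)
    (uk : ℕ → Fin n → ℝ)
    (hiter : ∀ k : ℕ, uk (k + 1) = uk k + B.mulVec (f - A.mulVec (uk k)))
    (k : ℕ) :
    ANorm A (u - uk (k + 1)) ≤
      specRadius (1 - B * A) / (1 - specRadius (1 - B * A)) *
        ANorm A (uk (k + 1) - uk k) := by
  rcases Nat.eq_zero_or_pos n with hn0 | hnpos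
  · subst hn0
    simp only [ANorm]
    rw [show ((A.mulVec (uk (k+1) - uk k)) ⬝ᵥ (uk (k+1) - uk k)) = 0 by
          simp [dotProduct],
        show ((A.mulVec (u - uk (k+1))) ⬝ᵥ (u - uk (k+1))) = 0 by
          simp [dotProduct]]
    simp
  set M : Matrix (Fin n) (Fin n) ℝ := 1 - B * A with hMdef
  have hAt : Aᵀ = A := by
    have := hA.isHermitian.eq
    simpa using this
  have hBt : Bᵀ = B := hB
  have hMA : Mᵀ * A = A * M := by
    have hMt : Mᵀ = 1 - A * B := by
      rw [hMdef, Matrix.transpose_sub, Matrix.transpose_one, Matrix.transpose_mul, hAt, hBt]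
    rw [hMt, hMdef]
    noncomm_ring
  -- symmetry of toLin' M w.r.t. the A-inner product
  have hsym : @LinearMap.IsSymmetric ℝ (Fin n → ℝ) _
      (Matrix.toNormedAddCommGroup A hA).toSeminormedAddCommGroup
      (Matrix.toInnerProductSpace A hA.posSemidef) (Matrix.toLin' M) := by
    intro x y
    show (A.mulVec y) ⬝ᵥ star (M.mulVec x) = (A.mulVec (M.mulVec y)) ⬝ᵥ star x
    rw [dotProduct_comm, dotProduct_comm (A.mulVec (M.mulVec y))]
    rw [star_trivial, star_trivial, Matrix.mulVec_mulVec,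
      show M.mulVec x = x ᵥ* Mᵀ from (Matrix.vecMul_transpose M x).symm,
      Matrix.dotProduct_mulVec, Matrix.vecMul_vecMul, hMA,
      Matrix.dotProduct_mulVec]
  -- error recurrence
  have herec : Matrix.toLin' M (u - uk k) = u - uk (k + 1) := by
    show M.mulVec (u - uk k) = u - uk (k + 1)
    rw [hMdef, Matrix.sub_mulVec, Matrix.one_mulVec, ← Matrix.mulVec_mulVec]
    have hAe : A.mulVec (u - uk k) = f - A.mulVec (uk k) := by
      rw [Matrix.mulVec_sub, hu]
    rw [hAe, hiter k]
    abel
  have key := @aux_symm_op_bound (Fin n → ℝ)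
    (Matrix.toNormedAddCommGroup A hA)
    (Matrix.toInnerProductSpace A hA.posSemidef)
    (inferInstanceAs (FiniteDimensional ℝ (Fin n → ℝ)))
    (lt_of_lt_of_eq hnpos (Module.finrank_fin_fun ℝ).symm)
    (Matrix.toLin' M) hsym (specRadius M) rfl hρ
    (ANorm A)
    (by
      intro v
      refine (congrArg Real.sqrt ?_).trans
        (@norm_eq_sqrt_real_inner (Fin n → ℝ)
          (Matrix.toNormedAddCommGroup A hA).toSeminormedAddCommGroup
          (Matrix.toInnerProductSpace A hA.posSemidef) v).symm
      show (A.mulVec v) ⬝ᵥ v = (A.mulVec v) ⬝ᵥ star v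
      rw [star_trivial])
    (u - uk k) (u - uk (k + 1)) herec
  have hsub : (u - uk k) - (u - uk (k + 1)) = uk (k + 1) - uk k := by abel
  rw [hsub] at key
  exact key
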